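/- Let (F, ≺) be an IS-family with minimum element sm(F), and define the excess ex(S) = |S| − |sm(F)|. Let S ∈ F with S ≠ sm(F). For each v ∈ Vis(S) \ S, let S(v) ≺ S be such that v ∈ hat(S(v)) and S is the witness of v w.r.t. S(v). Then |hat(S)| ≤ Σ_{v ∈ Vis(S) \ S} 2^{ex(S) − ex(S(v))}. -/

import Mathlib

/-- A family of subsets of a finite set `V` with a strict partial order. -/
structure ISFamily (V : Type*) [DecidableEq V] [Fintype V] where
  F : Finset (Finset V)
  prec : Finset V → Finset V → Prop
  prec_trans : ∀ {a b c : Finset V}, prec a b → prec b c → prec a c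
  prec_irrefl : ∀ a : Finset V, ¬ prec a a

namespace ISFamily

variable {V : Type*} [DecidableEq V] [Fintype V] (Fam : ISFamily V)

/-- The immediate predecessors of `S` in the family. -/
def Pred (S : Finset V) : Set (Finset V) :=
  {S' | S' ∈ Fam.F ∧ Fam.prec S' S ∧
    ¬ ∃ S'' ∈ Fam.F, Fam.prec S' S'' ∧ Fam.prec S'' S}

/-- `S'` covers `v` if some member of the family preceding `S'` contains `v` while
`S'` does not. -/
def Covers (S' : Finset V) (v : V) : Prop :=
  ∃ S'' ∈ Fam.F, Fam.prec S'' S' ∧ v ∈ S'' ∧ v ∉ S'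

/-- The visible set of `S`: vertices belonging to some immediate predecessor of `S`
and not covered by any immediate predecessor of `S`. -/
def Vis (S : Finset V) : Set V :=
  {v | (∃ S' ∈ Fam.Pred S, v ∈ S') ∧ ∀ S' ∈ Fam.Pred S, ¬ Fam.Covers S' v}

/-- `hat S = S \ ⋃_{S' ≺ S} S'`. -/
def hat (S : Finset V) : Set V :=
  ↑S \ ⋃ S' ∈ {S' | S' ∈ Fam.F ∧ Fam.prec S' S}, (↑S' : Set V)

/-- `W` is a witness of `v` w.r.t. `S`: a minimal element of the family with
`S ≺ W` and `v ∉ W`. -/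
def IsWitness (S : Finset V) (v : V) (W : Finset V) : Prop :=
  W ∈ Fam.F ∧ Fam.prec S W ∧ v ∉ W ∧
    ∀ W' ∈ Fam.F, Fam.prec S W' → v ∉ W' → ¬ Fam.prec W' W

/-- The axioms making `(F, ≺)` an IS-family with smallest element `sm`. -/
structure IsIS (sm : Finset V) : Prop where
  sm_mem : sm ∈ Fam.F
  SE : ∀ S ∈ Fam.F, S ≠ sm → Fam.prec sm S
  SM : ∀ S₁ ∈ Fam.F, ∀ S₂ ∈ Fam.F, Fam.prec S₁ S₂ → S₁.card < S₂.card
  SW : ∀ S ∈ Fam.F, ∀ v ∈ S, ∀ W₁ W₂ : Finset V,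
    Fam.IsWitness S v W₁ → Fam.IsWitness S v W₂ → W₁ = W₂
  TE : ∀ S₁ ∈ Fam.F, ∀ S₂ ∈ Fam.F, ∀ S₃ ∈ Fam.F,
    Fam.prec S₁ S₂ → Fam.prec S₂ S₃ → ∀ v ∈ S₁, v ∉ S₂ → v ∉ S₃
  LVS : ∀ S ∈ Fam.F, ∀ S' ∈ Fam.Pred S, S'.card ≤ (Fam.Vis S).ncard
  DVS : ∀ S ∈ Fam.F, S ≠ sm → ¬ (Fam.Vis S ⊆ ↑S)

/-- The excess of `S` relative to the smallest element `sm`. -/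
def ex (sm S : Finset V) : ℕ := S.card - sm.card

/-- The members of the family of excess at most `x`. -/
def Ex (sm : Finset V) (x : ℕ) : Finset (Finset V) :=
  Fam.F.filter (fun S => ex sm S ≤ x)

/-- The `x`-hat of `S`: elements of `hat S` not excluded by any member of `E_x`
succeeding `S`. -/
def hatx (sm : Finset V) (x : ℕ) (S : Finset V) : Set V :=
  {v ∈ Fam.hat S | ¬ ∃ S' ∈ Fam.Ex sm x, Fam.prec S S' ∧ v ∉ S'}

/-- `M(x) = Σ_{S ∈ E_x} 2^{x - ex(S)} · |hat_x(S)|`. -/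
noncomputable def M (sm : Finset V) (x : ℕ) : ℕ :=
  ∑ S ∈ Fam.Ex sm x, 2 ^ (x - ex sm S) * (Fam.hatx sm x S).ncard

end ISFamily

open ISFamily in
/-- `|hat(S)| ≤ Σ_{v ∈ Vis(S) \ S} 2^{ex(S) − ex(S(v))}`. -/
theorem basic_bound {V : Type*} [DecidableEq V] [Fintype V]
    (Fam : ISFamily V) (sm : Finset V) (hIS : Fam.IsIS sm)
    (S : Finset V) (hS : S ∈ Fam.F) (hSne : S ≠ sm)
    (Sv : V → Finset V)
    (hSv : ∀ v ∈ Fam.Vis S \ ↑S, Sv v ∈ Fam.F ∧ Fam.prec (Sv v) S ∧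
      v ∈ Fam.hat (Sv v) ∧ Fam.IsWitness (Sv v) v S) :
    (Fam.hat S).ncard ≤ ∑ᶠ v ∈ Fam.Vis S \ ↑S, 2 ^ (ex sm S - ex sm (Sv v)) := by
  classical
  obtain ⟨v₀, hv₀⟩ : ∃ v, v ∈ Fam.Vis S \ ↑S := by
    have h := hIS.DVS S hS hSne
    rw [Set.not_subset] at h
    obtain ⟨v, hv, hvS⟩ := h
    exact ⟨v, hv, hvS⟩
  obtain ⟨hF₀, hprec₀, hhat₀, hwit₀⟩ := hSv v₀ hv₀
  have hfinA : (Fam.Vis S \ ↑S).Finite := Set.toFinite _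
  set A := hfinA.toFinset with hAdef
  have hAcoe : (↑A : Set V) = Fam.Vis S \ ↑S := Set.Finite.coe_toFinset _
  have hv₀A : v₀ ∈ A := (Set.Finite.mem_toFinset _).mpr hv₀
  have hk : 1 ≤ A.card := Finset.card_pos.mpr ⟨v₀, hv₀A⟩
  -- cardinality facts
  have hcard_sm : ∀ T ∈ Fam.F, sm.card ≤ T.card := by
    intro T hT
    by_cases h : T = sm
    · subst h; exact le_rfl
    · exact le_of_lt (hIS.SM sm hIS.sm_mem T hT (hIS.SE T hT h))
  have hexp : ∀ v ∈ A, ex sm S - ex sm (Sv v) = S.card - (Sv v).card := by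
    intro v hv
    rw [Set.Finite.mem_toFinset] at hv
    obtain ⟨hF, hprec, -, -⟩ := hSv v hv
    have h1 := hcard_sm _ hF
    have h2 := hIS.SM _ hF _ hS hprec
    have h3 := hcard_sm _ hS
    unfold ex
    omega
  have hexp1 : ∀ v ∈ A, 1 ≤ S.card - (Sv v).card := by
    intro v hv
    rw [Set.Finite.mem_toFinset] at hv
    obtain ⟨hF, hprec, -, -⟩ := hSv v hv
    have := hIS.SM _ hF _ hS hprec
    omega
  -- an immediate predecessor T of S with S(v₀) ⪯ T
  obtain ⟨T, hTmem, hTmax⟩ := Finset.exists_max_image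
      (Fam.F.filter fun T => (T = Sv v₀ ∨ Fam.prec (Sv v₀) T) ∧ Fam.prec T S)
      Finset.card ⟨Sv v₀, by simp [hF₀, hprec₀]⟩
  rw [Finset.mem_filter] at hTmem
  obtain ⟨hTF, hT₀, hTS⟩ := hTmem
  have hTPred : T ∈ Fam.Pred S := by
    refine ⟨hTF, hTS, ?_⟩
    rintro ⟨S'', hS''F, hTS'', hS''S⟩
    have hmem : S'' ∈ Fam.F.filter
        fun T => (T = Sv v₀ ∨ Fam.prec (Sv v₀) T) ∧ Fam.prec T S := by
      rw [Finset.mem_filter]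
      refine ⟨hS''F, Or.inr ?_, hS''S⟩
      rcases hT₀ with h | h
      · rwa [← h]
      · exact Fam.prec_trans h hTS''
    have h1 := hTmax S'' hmem
    have h2 := hIS.SM T hTF S'' hS''F hTS''
    omega
  have hTcard : (Sv v₀).card ≤ T.card := by
    rcases hT₀ with h | h
    · rw [h]
    · exact le_of_lt (hIS.SM _ hF₀ _ hTF h)
  -- finset versions of Vis and hat
  have hfinV : (Fam.Vis S).Finite := Set.toFinite _
  have hfinH : (Fam.hat S).Finite := Set.toFinite _
  have hhatcard : (Fam.hat S).ncard = hfinH.toFinset.card :=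
    Set.ncard_eq_toFinset_card _ hfinH
  have hViscard : (Fam.Vis S).ncard = hfinV.toFinset.card :=
    Set.ncard_eq_toFinset_card _ hfinV
  have hLVS : T.card ≤ hfinV.toFinset.card := by
    rw [← hViscard]; exact hIS.LVS S hS T hTPred
  -- hat(S) ⊆ S \ Vis(S)
  have hhatsub : hfinH.toFinset ⊆ S \ hfinV.toFinset := by
    intro v hv
    rw [Set.Finite.mem_toFinset] at hv
    rw [Finset.mem_sdiff, Set.Finite.mem_toFinset]
    refine ⟨hv.1, ?_⟩
    intro hvVis
    obtain ⟨⟨S', hS'Pred, hvS'⟩, -⟩ := hvVis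
    exact hv.2 (Set.mem_biUnion (Set.mem_setOf.mpr ⟨hS'Pred.1, hS'Pred.2.1⟩) hvS')
  have h1 : hfinH.toFinset.card + (S ∩ hfinV.toFinset).card ≤ S.card := by
    have := Finset.card_le_card hhatsub
    have := Finset.card_sdiff_add_card_inter S hfinV.toFinset
    omega
  -- Vis ⊆ (Vis ∩ S) ∪ A
  have h2 : hfinV.toFinset.card ≤ (S ∩ hfinV.toFinset).card + A.card := by
    have hsub : hfinV.toFinset ⊆ (S ∩ hfinV.toFinset) ∪ A := by
      intro v hv
      rw [Finset.mem_union, Finset.mem_inter]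
      by_cases hvS : v ∈ S
      · exact Or.inl ⟨hvS, hv⟩
      · refine Or.inr ?_
        rw [Set.Finite.mem_toFinset] at hv ⊢
        exact ⟨hv, hvS⟩
    calc hfinV.toFinset.card ≤ ((S ∩ hfinV.toFinset) ∪ A).card :=
          Finset.card_le_card hsub
      _ ≤ _ := Finset.card_union_le _ _
  have hmain : hfinH.toFinset.card + (Sv v₀).card ≤ S.card + A.card := by omega
  -- the sum
  have hsum : ∑ᶠ v ∈ Fam.Vis S \ ↑S, 2 ^ (ex sm S - ex sm (Sv v))
      = ∑ v ∈ A, 2 ^ (ex sm S - ex sm (Sv v)) := by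
    rw [← hAcoe, finsum_mem_coe_finset]
  rw [hsum]
  rw [← Finset.add_sum_erase A _ hv₀A]
  have h3 : 2 * (A.card - 1) ≤ ∑ v ∈ A.erase v₀, 2 ^ (ex sm S - ex sm (Sv v)) := by
    have : ∀ v ∈ A.erase v₀, 2 ≤ 2 ^ (ex sm S - ex sm (Sv v)) := by
      intro v hv
      have hvA := Finset.mem_of_mem_erase hv
      rw [hexp v hvA]
      calc (2 : ℕ) = 2 ^ 1 := rfl
        _ ≤ _ := Nat.pow_le_pow_right (by norm_num) (hexp1 v hvA)
    calc 2 * (A.card - 1) = (A.erase v₀).card * 2 := by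
          rw [Finset.card_erase_of_mem hv₀A]; ring
      _ ≤ _ := Finset.card_nsmul_le_sum _ _ _ this
  have he₀ : ex sm S - ex sm (Sv v₀) = S.card - (Sv v₀).card := hexp v₀ hv₀A
  have hlt : (Sv v₀).card < S.card := hIS.SM _ hF₀ _ hS hprec₀
  have hpow : S.card - (Sv v₀).card < 2 ^ (S.card - (Sv v₀).card) :=
    Nat.lt_two_pow_self
  rw [hhatcard, he₀]
  omega
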